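/- Let W be a bornological V-module that is bornologically torsionfree. If every bounded subset S ⊆ W is contained in N + πW for some finitely generated V-submodule N ⊆ W (i.e. the quotient bornology on W/πW is fine), then for every m ∈ ℕ, every bounded subset S ⊆ W is contained in N + π^m W for some finitely generated V-submodule N ⊆ W (i.e. the quotient bornology on W/π^m W is fine). -/

import Mathlib

/-!
Statement 9.  `V` is a discrete valuation ring with uniformiser `π`.  `W` is a bornological
`V`-module (a `V`-module with a bornology such that the span of a bounded set is bounded)
that is bornologically torsionfree (multiplication by `π` is injective and a set is bounded
as soon as its image under `π • ·` is).  If every bounded `S ⊆ W` is contained in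
`N + πW` for some finitely generated submodule `N` (the quotient bornology on `W/πW` is
fine), then for every `m ∈ ℕ` every bounded `S ⊆ W` is contained in `N + π^m W` for some
finitely generated submodule `N` (the quotient bornology on `W/π^m W` is fine).
-/

open scoped Pointwise
open Bornology

theorem fine_mod_pi_pow (V : Type) [CommRing V] [IsDomain V] [IsDiscreteValuationRing V]
    (π : V) (hπ : Irreducible π)
    (W : Type) [AddCommGroup W] [Module V W] [Bornology W]
    (hmod : ∀ S : Set W, IsBounded S → IsBounded (Submodule.span V S : Set W))
    (hinj : Function.Injective fun w : W => π • w)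
    (htf : ∀ T : Set W, IsBounded ((fun w : W => π • w) '' T) → IsBounded T)
    (hfine : ∀ S : Set W, IsBounded S →
      ∃ N : Submodule V W, N.FG ∧ S ⊆ ↑(N ⊔ π • (⊤ : Submodule V W)))
    (m : ℕ) :
    ∀ S : Set W, IsBounded S →
      ∃ N : Submodule V W, N.FG ∧ S ⊆ ↑(N ⊔ π ^ m • (⊤ : Submodule V W)) := by
  induction m with
  | zero =>
    intro S _
    refine ⟨⊥, Submodule.fg_bot, ?_⟩
    simp [pow_zero, one_smul]
  | succ m ih =>
    intro S hS
    obtain ⟨N₀, hN₀fg, hS₀⟩ := hfine S hS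
    -- N₀ is a bounded set
    obtain ⟨t₀, ht₀⟩ := hN₀fg
    have hN₀b : IsBounded (N₀ : Set W) := by
      rw [← ht₀]
      exact hmod _ t₀.finite_toSet.isBounded
    -- the set of "π-quotients"
    set T : Set W := {w : W | ∃ s ∈ S, ∃ n ∈ N₀, n + π • w = s} with hT
    have hTb : IsBounded T := by
      apply htf
      have hsub : (fun w : W => π • w) '' T ⊆
          (Submodule.span V (S ∪ (N₀ : Set W)) : Set W) := by
        rintro x ⟨w, ⟨s, hs, n, hn, heq⟩, rfl⟩
        have hsmem : s ∈ Submodule.span V (S ∪ (N₀ : Set W)) :=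
          Submodule.subset_span (Or.inl hs)
        have hnmem : n ∈ Submodule.span V (S ∪ (N₀ : Set W)) :=
          Submodule.subset_span (Or.inr hn)
        have : π • w = s - n := by rw [← heq]; abel
        show π • w ∈ _
        rw [this]
        exact Submodule.sub_mem _ hsmem hnmem
      exact (hmod _ (hS.union hN₀b)).subset hsub
    obtain ⟨N₁, hN₁fg, hT₁⟩ := ih T hTb
    refine ⟨N₀ ⊔ π • N₁, ?_, ?_⟩
    · obtain ⟨t₁, ht₁⟩ := hN₁fg
      refine Submodule.FG.sup ⟨t₀, ht₀⟩ ?_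
      rw [← ht₁, Submodule.smul_span]
      exact Submodule.fg_span (t₁.finite_toSet.smul_set)
    · intro s hs
      have hsmem := hS₀ hs
      rw [SetLike.mem_coe, Submodule.mem_sup] at hsmem
      obtain ⟨n, hn, p, hp, heq⟩ := hsmem
      have : (p : W) ∈ π • ((⊤ : Submodule V W) : Set W) := hp
      obtain ⟨w, -, rfl⟩ := this
      have hwT : w ∈ T := ⟨s, hs, n, hn, heq⟩
      have hw := hT₁ hwT
      rw [SetLike.mem_coe, Submodule.mem_sup] at hw
      obtain ⟨y, hy, q, hq, heqw⟩ := hw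
      have : (q : W) ∈ π ^ m • ((⊤ : Submodule V W) : Set W) := hq
      obtain ⟨z, -, rfl⟩ := this
      rw [SetLike.mem_coe, Submodule.mem_sup]
      refine ⟨n + π • y, ?_, π ^ (m + 1) • z, ?_, ?_⟩
      · exact Submodule.add_mem _ (Submodule.mem_sup_left hn)
          (Submodule.mem_sup_right (Submodule.smul_mem_pointwise_smul _ _ _ hy))
      · exact Submodule.smul_mem_pointwise_smul _ _ _ Submodule.mem_top
      · simp only [← heq, ← heqw, smul_add, smul_smul, ← pow_succ']
        abel
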